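/- Homotopy transfer of coalgebra structure (Huebschmann–Kadeishvili, without assuming (d+∂)² = 0): if (M ⇄ N via ι, π, h) is a coalgebra contraction and ∂ ∈ 𝒩(N,h) is a coderivation of degree 1, then ι_∂ = Σ(h∂)^n ι and π_∂ = Σπ(∂h)^n are morphisms of graded coalgebras, and D_∂ = π∂ι_∂ is a coderivation of M. -/

import Mathlib

open TensorProduct

lemma stmt10_aux_double_sum {α : Type*} [AddCommMonoid α] (g : ℕ → ℕ → α) (s S : ℕ)
    (hS : 2 * s ≤ S) (hg : ∀ m k, s ≤ m ∨ s ≤ k → g m k = 0) :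
    ∑ n ∈ Finset.range S, ∑ j ∈ Finset.range (n + 1), g j (n - j)
      = ∑ m ∈ Finset.range S, ∑ k ∈ Finset.range S, g m k := by
  have h1 : ∀ n, ∑ j ∈ Finset.range (n + 1), g j (n - j)
      = ∑ ij ∈ Finset.HasAntidiagonal.antidiagonal n, g ij.1 ij.2 := fun n =>
    (Finset.Nat.sum_antidiagonal_eq_sum_range_succ_mk (fun ij => g ij.1 ij.2) n).symm
  simp only [h1]
  have hdisj : (↑(Finset.range S) : Set ℕ).PairwiseDisjoint Finset.HasAntidiagonal.antidiagonal := by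
    intro a _ b _ hab
    simp only [Finset.disjoint_left, Finset.HasAntidiagonal.mem_antidiagonal]
    intro p hp hq
    omega
  rw [← Finset.sum_biUnion hdisj, ← Finset.sum_product']
  apply Finset.sum_subset
  · intro p hp
    simp only [Finset.mem_biUnion, Finset.mem_range, Finset.HasAntidiagonal.mem_antidiagonal] at hp
    obtain ⟨n, hn, hpn⟩ := hp
    simp only [Finset.mem_product, Finset.mem_range]
    omega
  · intro p hp hnp
    simp only [Finset.mem_product, Finset.mem_range] at hp
    simp only [Finset.mem_biUnion, Finset.mem_range, Finset.HasAntidiagonal.mem_antidiagonal] at hnp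
    apply hg
    by_contra hc
    push_neg at hc
    exact hnp ⟨p.1 + p.2, by omega, rfl⟩

/-- Huebschmann–Kadeishvili, without assuming `(d+∂)² = 0`: if
`(M ⇄ N via ι, π, h)` is a coalgebra contraction and `∂ ∈ 𝒩(N,h)` is a
coderivation of degree `1`, then `ι_∂ = Σ(h∂)^n ι` and `π_∂ = Σπ(∂h)^n` are
morphisms of graded coalgebras and `D_∂ = π∂ι_∂` is a coderivation of `M`
(Koszul signs are encoded via the sign operators `σ`). -/
theorem stmt10 {R M N : Type*} [CommRing R]
    [AddCommGroup M] [Module R M] [AddCommGroup N] [Module R N]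
    (dM : M →ₗ[R] M) (dN : N →ₗ[R] N)
    (hdM : dM ∘ₗ dM = 0) (hdN : dN ∘ₗ dN = 0)
    (ι : M →ₗ[R] N) (π : N →ₗ[R] M) (h : N →ₗ[R] N)
    (hι : dN ∘ₗ ι = ι ∘ₗ dM) (hπ : dM ∘ₗ π = π ∘ₗ dN)
    (c1 : π ∘ₗ ι = LinearMap.id)
    (c2 : ι ∘ₗ π - LinearMap.id = dN ∘ₗ h + h ∘ₗ dN)
    (c3 : π ∘ₗ h = 0) (c4 : h ∘ₗ ι = 0) (c5 : h ∘ₗ h = 0)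
    -- sign operators encoding the grading
    (σM : M →ₗ[R] M) (σN : N →ₗ[R] N)
    (sM : σM ∘ₗ σM = LinearMap.id) (sN : σN ∘ₗ σN = LinearMap.id)
    (sdN : σN ∘ₗ dN = -(dN ∘ₗ σN)) (sh : σN ∘ₗ h = -(h ∘ₗ σN))
    (sι : σN ∘ₗ ι = ι ∘ₗ σM) (sπ : π ∘ₗ σN = σM ∘ₗ π)
    -- the dg coalgebra structure of `N` and the transferred coproduct on `M`
    (Δ : N →ₗ[R] N ⊗[R] N)
    (hcoassoc : (TensorProduct.assoc R N N N).toLinearMap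
        ∘ₗ TensorProduct.map Δ LinearMap.id ∘ₗ Δ =
      TensorProduct.map LinearMap.id Δ ∘ₗ Δ)
    (hΔd : Δ ∘ₗ dN =
      (TensorProduct.map dN LinearMap.id + TensorProduct.map σN dN) ∘ₗ Δ)
    (ΔM : M →ₗ[R] M ⊗[R] M)
    (hΔM : ΔM = TensorProduct.map π π ∘ₗ Δ ∘ₗ ι)
    -- `(M ⇄ N, h)` is a coalgebra contraction
    (hΔι : Δ ∘ₗ ι = TensorProduct.map ι ι ∘ₗ ΔM)
    (hΔπ : ΔM ∘ₗ π = TensorProduct.map π π ∘ₗ Δ)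
    (hΔh : (TensorProduct.map ((ι ∘ₗ π) ∘ₗ σN) h
              + TensorProduct.map h LinearMap.id) ∘ₗ Δ = Δ ∘ₗ h)
    -- `∂` is a coderivation of degree 1 belonging to `𝒩(N,h)`
    (D : N →ₗ[R] N) (sD : σN ∘ₗ D = -(D ∘ₗ σN))
    (hcoder : Δ ∘ₗ D =
      (TensorProduct.map D LinearMap.id + TensorProduct.map σN D) ∘ₗ Δ)
    (n1 : ∀ x : M, ∃ s : ℕ, ∀ n ≥ s, ((h ∘ₗ D) ^ n) (ι x) = 0)
    (n2 : ∀ y : N, ∃ s : ℕ, ∀ n ≥ s, π (((D ∘ₗ h) ^ n) y) = 0)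
    -- the transferred maps
    (ιD : M →ₗ[R] N) (hιD : ∀ x : M, ιD x = ∑ᶠ n : ℕ, ((h ∘ₗ D) ^ n) (ι x))
    (πD : N →ₗ[R] M) (hπD : ∀ y : N, πD y = ∑ᶠ n : ℕ, π (((D ∘ₗ h) ^ n) y))
    (DD : M →ₗ[R] M) (hDD : DD = π ∘ₗ D ∘ₗ ιD) :
    -- `ι_∂`, `π_∂` are morphisms of graded coalgebras,
    -- `D_∂` is a coderivation of `M`
    Δ ∘ₗ ιD = TensorProduct.map ιD ιD ∘ₗ ΔM ∧
    ΔM ∘ₗ πD = TensorProduct.map πD πD ∘ₗ Δ ∧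
    ΔM ∘ₗ DD =
      (TensorProduct.map DD LinearMap.id + TensorProduct.map σM DD) ∘ₗ ΔM := by
  classical
  -- pointwise versions of the hypotheses
  have c1' : ∀ x, π (ι x) = x := fun x => by simpa using LinearMap.ext_iff.mp c1 x
  have c3' : ∀ z, π (h z) = 0 := fun z => by simpa using LinearMap.ext_iff.mp c3 z
  have c4' : ∀ x, h (ι x) = 0 := fun x => by simpa using LinearMap.ext_iff.mp c4 x
  have c5' : ∀ z, h (h z) = 0 := fun z => by simpa using LinearMap.ext_iff.mp c5 z
  have sM' : ∀ x, σM (σM x) = x := fun x => by simpa using LinearMap.ext_iff.mp sM x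
  have sN' : ∀ z, σN (σN z) = z := fun z => by simpa using LinearMap.ext_iff.mp sN z
  have sh' : ∀ z, σN (h z) = -h (σN z) := fun z => by simpa using LinearMap.ext_iff.mp sh z
  have sD' : ∀ z, σN (D z) = -D (σN z) := fun z => by simpa using LinearMap.ext_iff.mp sD z
  have sι' : ∀ x, σN (ι x) = ι (σM x) := fun x => by simpa using LinearMap.ext_iff.mp sι x
  have sπ' : ∀ z, π (σN z) = σM (π z) := fun z => by simpa using LinearMap.ext_iff.mp sπ z
  have hΔι' : ∀ x, Δ (ι x) = TensorProduct.map ι ι (ΔM x) := fun x => by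
    have := LinearMap.ext_iff.mp hΔι x
    simpa only [LinearMap.comp_apply] using this
  have hΔπ' : ∀ z, ΔM (π z) = TensorProduct.map π π (Δ z) := fun z => by
    have := LinearMap.ext_iff.mp hΔπ z
    simpa only [LinearMap.comp_apply] using this
  -- the operators A = h∂ and B = ∂h
  set A : N →ₗ[R] N := h ∘ₗ D with hA_def
  set B : N →ₗ[R] N := D ∘ₗ h with hB_def
  have hA_app : ∀ z, A z = h (D z) := fun z => rfl
  have hB_app : ∀ z, B z = D (h z) := fun z => rfl
  have powA : ∀ (n : ℕ) (z : N), (A ^ (n + 1)) z = A ((A ^ n) z) := fun n z => by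
    rw [pow_succ', Module.End.mul_apply]
  have powB2 : ∀ (n : ℕ) (z : N), (B ^ (n + 1)) z = (B ^ n) (B z) := fun n z => by
    rw [pow_succ, Module.End.mul_apply]
  have powB : ∀ (n : ℕ) (z : N), (B ^ (n + 1)) z = B ((B ^ n) z) := fun n z => by
    rw [pow_succ', Module.End.mul_apply]
  -- basic vanishing and sign facts
  have hhA : ∀ z, h (A z) = 0 := fun z => by rw [hA_app]; exact c5' (D z)
  have hπA : ∀ z, π (A z) = 0 := fun z => by rw [hA_app]; exact c3' (D z)
  have hσA : ∀ z, σN (A z) = A (σN z) := fun z => by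
    rw [hA_app, hA_app, sh' (D z), sD' z, map_neg, neg_neg]
  have F1 : ∀ (n : ℕ) (x : M), h ((A ^ n) (ι x)) = 0 := by
    intro n x
    cases n with
    | zero => simpa using c4' x
    | succ n => rw [powA]; exact hhA _
  have F2 : ∀ (n : ℕ) (z : N), π ((A ^ (n + 1)) z) = 0 := fun n z => by
    rw [powA]; exact hπA _
  have F3 : ∀ (n : ℕ) (z : N), σN ((A ^ n) z) = (A ^ n) (σN z) := by
    intro n
    induction n with
    | zero => intro z; simp
    | succ n ih => intro z; rw [powA, hσA, ih, powA]
  have hBh : ∀ z, B (h z) = 0 := fun z => by rw [hB_app, c5', map_zero]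
  have hBι : ∀ x, B (ι x) = 0 := fun x => by rw [hB_app, c4', map_zero]
  have G1 : ∀ (n : ℕ) (z : N), π ((B ^ n) (h z)) = 0 := by
    intro n z
    cases n with
    | zero => simpa using c3' z
    | succ n => rw [powB2, hBh, map_zero, map_zero]
  have G2 : ∀ (n : ℕ) (x : M), (B ^ (n + 1)) (ι x) = 0 := fun n x => by
    rw [powB2, hBι, map_zero]
  -- the operators E, E' on N ⊗ N
  set K : N ⊗[R] N →ₗ[R] N ⊗[R] N :=
    TensorProduct.map ((ι ∘ₗ π) ∘ₗ σN) h + TensorProduct.map h LinearMap.id with hK_def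
  set L : N ⊗[R] N →ₗ[R] N ⊗[R] N :=
    TensorProduct.map D LinearMap.id + TensorProduct.map σN D with hL_def
  set E : N ⊗[R] N →ₗ[R] N ⊗[R] N := K ∘ₗ L with hE_def
  set E' : N ⊗[R] N →ₗ[R] N ⊗[R] N := L ∘ₗ K with hE'_def
  have hΔh' : ∀ z, Δ (h z) = K (Δ z) := by
    intro z
    have := LinearMap.ext_iff.mp hΔh z
    simp only [LinearMap.comp_apply] at this
    exact this.symm
  have hcoder' : ∀ z, Δ (D z) = L (Δ z) := by
    intro z
    have := LinearMap.ext_iff.mp hcoder z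
    simpa only [LinearMap.comp_apply] using this
  have powE : ∀ (n : ℕ) (t : N ⊗[R] N), (E ^ (n + 1)) t = E ((E ^ n) t) := fun n t => by
    rw [pow_succ', Module.End.mul_apply]
  have powE' : ∀ (n : ℕ) (t : N ⊗[R] N), (E' ^ (n + 1)) t = E' ((E' ^ n) t) := fun n t => by
    rw [pow_succ', Module.End.mul_apply]
  have powE'2 : ∀ (n : ℕ) (t : N ⊗[R] N), (E' ^ (n + 1)) t = (E' ^ n) (E' t) := fun n t => by
    rw [pow_succ, Module.End.mul_apply]
  have ΔA : ∀ z, Δ (A z) = E (Δ z) := fun z => by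
    rw [hA_app, hΔh' (D z), hcoder' z]; rfl
  have ΔB : ∀ z, Δ (B z) = E' (Δ z) := fun z => by
    rw [hB_app, hcoder' (h z), hΔh' z]; rfl
  have ΔAn : ∀ (n : ℕ) (z : N), Δ ((A ^ n) z) = (E ^ n) (Δ z) := by
    intro n
    induction n with
    | zero => intro z; simp
    | succ n ih => intro z; rw [powA, ΔA, ih, powE]
  have ΔBn : ∀ (n : ℕ) (z : N), Δ ((B ^ n) z) = (E' ^ n) (Δ z) := by
    intro n
    induction n with
    | zero => intro z; simp
    | succ n ih => intro z; rw [powB, ΔB, ih, powE']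
  -- PART 1 -----------------------------------------------------------------
  have Step1 : ∀ (m k : ℕ),
      E ∘ₗ TensorProduct.map ((A ^ m) ∘ₗ ι) ((A ^ k) ∘ₗ ι)
        = TensorProduct.map ((A ^ (m + 1)) ∘ₗ ι) ((A ^ k) ∘ₗ ι)
          + (if m = 0 then TensorProduct.map ((A ^ 0) ∘ₗ ι) ((A ^ (k + 1)) ∘ₗ ι) else 0) := by
    intro m k
    apply TensorProduct.ext'
    intro x y
    simp only [LinearMap.comp_apply, TensorProduct.map_tmul, hE_def, hK_def, hL_def,
      LinearMap.add_apply, LinearMap.id_apply, map_add, TensorProduct.map_tmul]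
    rw [F1 k y, tmul_zero, sN']
    rw [show h (D ((A ^ m) (ι x))) = (A ^ (m + 1)) (ι x) from (powA m (ι x)).symm]
    rw [show h (D ((A ^ k) (ι y))) = (A ^ (k + 1)) (ι y) from (powA k (ι y)).symm]
    rw [show h (σN ((A ^ m) (ι x))) = 0 by rw [F3, sι', F1]]
    rw [zero_tmul, zero_add, add_zero]
    cases m with
    | zero =>
      simp [c1']
    | succ m =>
      rw [F2 m (ι x), map_zero, zero_tmul]
      simp
  have Pow1 : ∀ (n : ℕ) (t : M ⊗[R] M),
      (E ^ n) (TensorProduct.map ι ι t)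
        = ∑ j ∈ Finset.range (n + 1),
            TensorProduct.map ((A ^ j) ∘ₗ ι) ((A ^ (n - j)) ∘ₗ ι) t := by
    intro n
    induction n with
    | zero => intro t; simp [Module.End.one_eq_id]
    | succ n ih =>
      intro t
      rw [powE, ih t, map_sum]
      have hstep : ∀ j ∈ Finset.range (n + 1),
          E (TensorProduct.map ((A ^ j) ∘ₗ ι) ((A ^ (n - j)) ∘ₗ ι) t)
            = TensorProduct.map ((A ^ (j + 1)) ∘ₗ ι) ((A ^ (n - j)) ∘ₗ ι) t
              + (if j = 0 then TensorProduct.map ((A ^ 0) ∘ₗ ι) ((A ^ (n - j + 1)) ∘ₗ ι) t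
                  else 0) := by
        intro j _
        have := LinearMap.ext_iff.mp (Step1 j (n - j)) t
        simp only [LinearMap.comp_apply, LinearMap.add_apply] at this
        rw [this]
        by_cases hj : j = 0 <;> simp [hj]
      rw [Finset.sum_congr rfl hstep, Finset.sum_add_distrib]
      have h2 : (∑ j ∈ Finset.range (n + 1),
          (if j = 0 then TensorProduct.map ((A ^ 0) ∘ₗ ι) ((A ^ (n - j + 1)) ∘ₗ ι) t else 0))
          = TensorProduct.map ((A ^ 0) ∘ₗ ι) ((A ^ (n + 1)) ∘ₗ ι) t := by
        rw [Finset.sum_eq_single 0]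
        · simp
        · intro b _ hb; simp [hb]
        · intro h0; exact absurd (Finset.mem_range.mpr (by omega)) h0
      rw [h2]
      rw [Finset.sum_range_succ'
        (fun j => TensorProduct.map ((A ^ j) ∘ₗ ι) ((A ^ (n + 1 - j)) ∘ₗ ι) t) (n + 1)]
      congr 1
      apply Finset.sum_congr rfl
      intro j hj
      have hnj : n + 1 - (j + 1) = n - j := by omega
      rw [hnj]
  have T1 : ∀ t : M ⊗[R] M, ∃ s : ℕ,
      (∀ m k, s ≤ m ∨ s ≤ k → TensorProduct.map ((A ^ m) ∘ₗ ι) ((A ^ k) ∘ₗ ι) t = 0) ∧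
      ∀ S, s ≤ S → TensorProduct.map ιD ιD t
        = ∑ m ∈ Finset.range S, ∑ k ∈ Finset.range S,
            TensorProduct.map ((A ^ m) ∘ₗ ι) ((A ^ k) ∘ₗ ι) t := by
    intro t
    induction t using TensorProduct.induction_on with
    | zero => exact ⟨0, fun m k _ => by simp, fun S _ => by simp⟩
    | tmul x y =>
      obtain ⟨sx, hx⟩ := n1 x
      obtain ⟨sy, hy⟩ := n1 y
      refine ⟨max sx sy, ?_, ?_⟩
      · intro m k hmk
        simp only [TensorProduct.map_tmul, LinearMap.comp_apply]
        rcases hmk with hm | hk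
        · rw [hx m (le_trans (le_max_left _ _) hm), TensorProduct.zero_tmul]
        · rw [hy k (le_trans (le_max_right _ _) hk), TensorProduct.tmul_zero]
      · intro S hS
        have hsx : sx ≤ S := le_trans (le_max_left _ _) hS
        have hsy : sy ≤ S := le_trans (le_max_right _ _) hS
        have hxS : ιD x = ∑ m ∈ Finset.range S, (A ^ m) (ι x) := by
          rw [hιD x]
          apply finsum_eq_sum_of_support_subset
          intro n hn
          simp only [Function.mem_support] at hn
          simp only [Finset.coe_range, Set.mem_Iio]
          by_contra hc
          exact hn (hx n (by omega))
        have hyS : ιD y = ∑ k ∈ Finset.range S, (A ^ k) (ι y) := by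
          rw [hιD y]
          apply finsum_eq_sum_of_support_subset
          intro n hn
          simp only [Function.mem_support] at hn
          simp only [Finset.coe_range, Set.mem_Iio]
          by_contra hc
          exact hn (hy n (by omega))
        simp only [TensorProduct.map_tmul, hxS, hyS, TensorProduct.sum_tmul,
          TensorProduct.tmul_sum, LinearMap.comp_apply]
        exact Finset.sum_comm
    | add t₁ t₂ ih₁ ih₂ =>
      obtain ⟨s₁, hv₁, hs₁⟩ := ih₁
      obtain ⟨s₂, hv₂, hs₂⟩ := ih₂
      refine ⟨max s₁ s₂, ?_, ?_⟩
      · intro m k hmk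
        rw [map_add, hv₁ m k, hv₂ m k, add_zero]
        · rcases hmk with hm | hk
          · exact Or.inl (le_trans (le_max_right _ _) hm)
          · exact Or.inr (le_trans (le_max_right _ _) hk)
        · rcases hmk with hm | hk
          · exact Or.inl (le_trans (le_max_left _ _) hm)
          · exact Or.inr (le_trans (le_max_left _ _) hk)
      · intro S hS
        rw [map_add, hs₁ S (le_trans (le_max_left _ _) hS),
          hs₂ S (le_trans (le_max_right _ _) hS), ← Finset.sum_add_distrib]
        apply Finset.sum_congr rfl
        intro m _
        rw [← Finset.sum_add_distrib]
        apply Finset.sum_congr rfl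
        intro k _
        rw [map_add]
  have part1 : Δ ∘ₗ ιD = TensorProduct.map ιD ιD ∘ₗ ΔM := by
    apply LinearMap.ext
    intro x
    simp only [LinearMap.comp_apply]
    obtain ⟨s₁, hs₁⟩ := n1 x
    obtain ⟨s₀, hv, hsum⟩ := T1 (ΔM x)
    have hxS : ιD x = ∑ n ∈ Finset.range (max s₁ (2 * s₀)), (A ^ n) (ι x) := by
      rw [hιD x]
      apply finsum_eq_sum_of_support_subset
      intro n hn
      simp only [Function.mem_support] at hn
      simp only [Finset.coe_range, Set.mem_Iio]
      have h1 : s₁ ≤ max s₁ (2 * s₀) := le_max_left _ _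
      by_contra hc
      exact hn (hs₁ n (by omega))
    rw [hxS, map_sum]
    have hterm : ∀ n ∈ Finset.range (max s₁ (2 * s₀)),
        Δ ((A ^ n) (ι x)) = ∑ j ∈ Finset.range (n + 1),
          TensorProduct.map ((A ^ j) ∘ₗ ι) ((A ^ (n - j)) ∘ₗ ι) (ΔM x) := by
      intro n _
      rw [ΔAn n (ι x), hΔι' x, Pow1 n (ΔM x)]
    rw [Finset.sum_congr rfl hterm]
    rw [stmt10_aux_double_sum
      (fun m k => TensorProduct.map ((A ^ m) ∘ₗ ι) ((A ^ k) ∘ₗ ι) (ΔM x)) s₀ _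
      (le_max_right _ _) hv]
    exact (hsum _ (le_trans (by omega) (le_max_right s₁ (2 * s₀)))).symm
  -- PART 2 -----------------------------------------------------------------
  have Step2 : ∀ (m k : ℕ),
      TensorProduct.map (π ∘ₗ (B ^ m)) (π ∘ₗ (B ^ k)) ∘ₗ E'
        = TensorProduct.map (π ∘ₗ (B ^ (m + 1))) (π ∘ₗ (B ^ k))
          + (if m = 0 then TensorProduct.map (π ∘ₗ (B ^ 0)) (π ∘ₗ (B ^ (k + 1))) else 0) := by
    intro m k
    apply TensorProduct.ext'
    intro a b
    simp only [LinearMap.comp_apply, hE'_def, hK_def, hL_def, LinearMap.add_apply,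
      LinearMap.id_apply, map_add, TensorProduct.map_tmul]
    rw [G1 k b, tmul_zero]
    rw [show σN (ι (π (σN a))) = ι (π a) by rw [sι', sπ', sM']]
    rw [show D (h a) = B a from (hB_app a).symm]
    rw [show D (h b) = B b from (hB_app b).symm]
    rw [← powB2 k b, ← powB2 m a]
    rw [sh' a, map_neg, map_neg, G1 m (σN a), neg_zero, zero_tmul]
    rw [zero_add, add_zero]
    cases m with
    | zero =>
      simp only [c1', pow_zero, Module.End.one_apply, if_pos rfl, LinearMap.add_apply,
        TensorProduct.map_tmul, LinearMap.comp_apply]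
      exact add_comm _ _
    | succ m =>
      rw [G2 m (π a), map_zero, zero_tmul]
      simp
  have Pow2 : ∀ (n : ℕ) (t : N ⊗[R] N),
      TensorProduct.map π π ((E' ^ n) t)
        = ∑ j ∈ Finset.range (n + 1),
            TensorProduct.map (π ∘ₗ (B ^ j)) (π ∘ₗ (B ^ (n - j))) t := by
    intro n
    induction n with
    | zero => intro t; simp [Module.End.one_eq_id]
    | succ n ih =>
      intro t
      rw [powE'2, ih (E' t)]
      have hstep : ∀ j ∈ Finset.range (n + 1),
          TensorProduct.map (π ∘ₗ (B ^ j)) (π ∘ₗ (B ^ (n - j))) (E' t)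
            = TensorProduct.map (π ∘ₗ (B ^ (j + 1))) (π ∘ₗ (B ^ (n - j))) t
              + (if j = 0 then
                  TensorProduct.map (π ∘ₗ (B ^ 0)) (π ∘ₗ (B ^ (n - j + 1))) t else 0) := by
        intro j _
        have := LinearMap.ext_iff.mp (Step2 j (n - j)) t
        simp only [LinearMap.comp_apply, LinearMap.add_apply] at this
        rw [this]
        by_cases hj : j = 0 <;> simp [hj]
      rw [Finset.sum_congr rfl hstep, Finset.sum_add_distrib]
      have h2 : (∑ j ∈ Finset.range (n + 1),
          (if j = 0 then
            TensorProduct.map (π ∘ₗ (B ^ 0)) (π ∘ₗ (B ^ (n - j + 1))) t else 0))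
          = TensorProduct.map (π ∘ₗ (B ^ 0)) (π ∘ₗ (B ^ (n + 1))) t := by
        rw [Finset.sum_eq_single 0]
        · simp
        · intro b _ hb; simp [hb]
        · intro h0; exact absurd (Finset.mem_range.mpr (by omega)) h0
      rw [h2]
      rw [Finset.sum_range_succ'
        (fun j => TensorProduct.map (π ∘ₗ (B ^ j)) (π ∘ₗ (B ^ (n + 1 - j))) t) (n + 1)]
      congr 1
      apply Finset.sum_congr rfl
      intro j hj
      have hnj : n + 1 - (j + 1) = n - j := by omega
      rw [hnj]
  have T2 : ∀ t : N ⊗[R] N, ∃ s : ℕ,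
      (∀ m k, s ≤ m ∨ s ≤ k →
        TensorProduct.map (π ∘ₗ (B ^ m)) (π ∘ₗ (B ^ k)) t = 0) ∧
      ∀ S, s ≤ S → TensorProduct.map πD πD t
        = ∑ m ∈ Finset.range S, ∑ k ∈ Finset.range S,
            TensorProduct.map (π ∘ₗ (B ^ m)) (π ∘ₗ (B ^ k)) t := by
    intro t
    induction t using TensorProduct.induction_on with
    | zero => exact ⟨0, fun m k _ => by simp, fun S _ => by simp⟩
    | tmul a b =>
      obtain ⟨sa, ha⟩ := n2 a
      obtain ⟨sb, hb⟩ := n2 b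
      refine ⟨max sa sb, ?_, ?_⟩
      · intro m k hmk
        simp only [TensorProduct.map_tmul, LinearMap.comp_apply]
        rcases hmk with hm | hk
        · rw [ha m (le_trans (le_max_left _ _) hm), TensorProduct.zero_tmul]
        · rw [hb k (le_trans (le_max_right _ _) hk), TensorProduct.tmul_zero]
      · intro S hS
        have hsa : sa ≤ S := le_trans (le_max_left _ _) hS
        have hsb : sb ≤ S := le_trans (le_max_right _ _) hS
        have haS : πD a = ∑ m ∈ Finset.range S, π ((B ^ m) a) := by
          rw [hπD a]
          apply finsum_eq_sum_of_support_subset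
          intro n hn
          simp only [Function.mem_support] at hn
          simp only [Finset.coe_range, Set.mem_Iio]
          by_contra hc
          exact hn (ha n (by omega))
        have hbS : πD b = ∑ k ∈ Finset.range S, π ((B ^ k) b) := by
          rw [hπD b]
          apply finsum_eq_sum_of_support_subset
          intro n hn
          simp only [Function.mem_support] at hn
          simp only [Finset.coe_range, Set.mem_Iio]
          by_contra hc
          exact hn (hb n (by omega))
        simp only [TensorProduct.map_tmul, haS, hbS, TensorProduct.sum_tmul,
          TensorProduct.tmul_sum, LinearMap.comp_apply]
        exact Finset.sum_comm
    | add t₁ t₂ ih₁ ih₂ =>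
      obtain ⟨s₁, hv₁, hs₁⟩ := ih₁
      obtain ⟨s₂, hv₂, hs₂⟩ := ih₂
      refine ⟨max s₁ s₂, ?_, ?_⟩
      · intro m k hmk
        rw [map_add, hv₁ m k, hv₂ m k, add_zero]
        · rcases hmk with hm | hk
          · exact Or.inl (le_trans (le_max_right _ _) hm)
          · exact Or.inr (le_trans (le_max_right _ _) hk)
        · rcases hmk with hm | hk
          · exact Or.inl (le_trans (le_max_left _ _) hm)
          · exact Or.inr (le_trans (le_max_left _ _) hk)
      · intro S hS
        rw [map_add, hs₁ S (le_trans (le_max_left _ _) hS),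
          hs₂ S (le_trans (le_max_right _ _) hS), ← Finset.sum_add_distrib]
        apply Finset.sum_congr rfl
        intro m _
        rw [← Finset.sum_add_distrib]
        apply Finset.sum_congr rfl
        intro k _
        rw [map_add]
  have part2 : ΔM ∘ₗ πD = TensorProduct.map πD πD ∘ₗ Δ := by
    apply LinearMap.ext
    intro y
    simp only [LinearMap.comp_apply]
    obtain ⟨s₁, hs₁⟩ := n2 y
    obtain ⟨s₀, hv, hsum⟩ := T2 (Δ y)
    have hyS : πD y = ∑ n ∈ Finset.range (max s₁ (2 * s₀)), π ((B ^ n) y) := by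
      rw [hπD y]
      apply finsum_eq_sum_of_support_subset
      intro n hn
      simp only [Function.mem_support] at hn
      simp only [Finset.coe_range, Set.mem_Iio]
      have h1 : s₁ ≤ max s₁ (2 * s₀) := le_max_left _ _
      by_contra hc
      exact hn (hs₁ n (by omega))
    rw [hyS, map_sum]
    have hterm : ∀ n ∈ Finset.range (max s₁ (2 * s₀)),
        ΔM (π ((B ^ n) y)) = ∑ j ∈ Finset.range (n + 1),
          TensorProduct.map (π ∘ₗ (B ^ j)) (π ∘ₗ (B ^ (n - j))) (Δ y) := by
      intro n _
      rw [hΔπ' ((B ^ n) y), ΔBn n y, Pow2 n (Δ y)]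
    rw [Finset.sum_congr rfl hterm]
    rw [stmt10_aux_double_sum
      (fun m k => TensorProduct.map (π ∘ₗ (B ^ m)) (π ∘ₗ (B ^ k)) (Δ y)) s₀ _
      (le_max_right _ _) hv]
    exact (hsum _ (le_trans (by omega) (le_max_right s₁ (2 * s₀)))).symm
  -- PART 3 -----------------------------------------------------------------
  have hπιD' : ∀ x, π (ιD x) = x := by
    intro x
    obtain ⟨s, hs⟩ := n1 x
    have hxS : ιD x = ∑ n ∈ Finset.range (max s 1), (A ^ n) (ι x) := by
      rw [hιD x]
      apply finsum_eq_sum_of_support_subset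
      intro n hn
      simp only [Function.mem_support] at hn
      simp only [Finset.coe_range, Set.mem_Iio]
      have h1 : s ≤ max s 1 := le_max_left _ _
      by_contra hc
      exact hn (hs n (by omega))
    rw [hxS, map_sum, Finset.sum_eq_single 0]
    · simp [c1']
    · intro b _ hb
      obtain ⟨n, rfl⟩ := Nat.exists_eq_succ_of_ne_zero hb
      exact F2 n (ι x)
    · intro h0
      exact absurd (Finset.mem_range.mpr (by omega)) h0
  have hπσιD' : ∀ x, π (σN (ιD x)) = σM x := by
    intro x
    obtain ⟨s, hs⟩ := n1 x
    have hxS : ιD x = ∑ n ∈ Finset.range (max s 1), (A ^ n) (ι x) := by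
      rw [hιD x]
      apply finsum_eq_sum_of_support_subset
      intro n hn
      simp only [Function.mem_support] at hn
      simp only [Finset.coe_range, Set.mem_Iio]
      have h1 : s ≤ max s 1 := le_max_left _ _
      by_contra hc
      exact hn (hs n (by omega))
    rw [hxS, map_sum, map_sum, Finset.sum_eq_single 0]
    · simp [sι', c1']
    · intro b _ hb
      obtain ⟨n, rfl⟩ := Nat.exists_eq_succ_of_ne_zero hb
      rw [F3, sι']
      exact F2 n (ι (σM x))
    · intro h0
      exact absurd (Finset.mem_range.mpr (by omega)) h0
  have hDD' : ∀ x, DD x = π (D (ιD x)) := fun x => by rw [hDD]; rfl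
  have part1' : ∀ x, Δ (ιD x) = TensorProduct.map ιD ιD (ΔM x) := fun x => by
    have := LinearMap.ext_iff.mp part1 x
    simpa only [LinearMap.comp_apply] using this
  have key : TensorProduct.map π π ∘ₗ (L ∘ₗ TensorProduct.map ιD ιD)
      = TensorProduct.map DD LinearMap.id + TensorProduct.map σM DD := by
    apply TensorProduct.ext'
    intro x y
    simp only [LinearMap.comp_apply, hL_def, LinearMap.add_apply, TensorProduct.map_tmul,
      LinearMap.id_apply, map_add]
    rw [hπιD' y, hπσιD' x, ← hDD' x, ← hDD' y]
  have part3 : ΔM ∘ₗ DD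
      = (TensorProduct.map DD LinearMap.id + TensorProduct.map σM DD) ∘ₗ ΔM := by
    apply LinearMap.ext
    intro x
    simp only [LinearMap.comp_apply, LinearMap.add_apply]
    rw [hDD' x, hΔπ' (D (ιD x)), hcoder' (ιD x), part1' x]
    have := LinearMap.ext_iff.mp key (ΔM x)
    simp only [LinearMap.comp_apply, LinearMap.add_apply] at this
    exact this
  exact ⟨part1, part2, part3⟩
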